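/- For n ∈ ℕ and z ∈ ℝ, define J_n(2z) = ∑_{k=0}^∞ (−1)^k z^{n+2k}/(k!(n+k)!) (the Bessel function of the first kind). Let θ > 0 be real and write J_x = J_x(2√θ). Then for all x, y ∈ ℕ with x ≠ y, the discrete Bessel kernel satisfies √θ·(J_x J_{y+1} − J_y J_{x+1})/(x−y) = ∑_{k=0}^∞ J_{x+k+1}(2√θ) · J_{y+k+1}(2√θ). -/

import Mathlib

open Filter Finset

/-- `besselJ n z = J_n(2z) = ∑_{k=0}^∞ (−1)^k z^{n+2k}/(k!(n+k)!)`, the Bessel function of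
the first kind of integer order `n`, evaluated at `2z`. -/
noncomputable def besselJ (n : ℕ) (z : ℝ) : ℝ :=
  ∑' k : ℕ, (-1 : ℝ) ^ k * z ^ (n + 2 * k) / ((Nat.factorial k) * (Nat.factorial (n + k)))

noncomputable def bterm (n : ℕ) (z : ℝ) (k : ℕ) : ℝ :=
  (-1 : ℝ) ^ k * z ^ (n + 2 * k) / ((Nat.factorial k) * (Nat.factorial (n + k)))

lemma besselJ_eq (n : ℕ) (z : ℝ) : besselJ n z = ∑' k, bterm n z k := rfl

lemma abs_bterm (n : ℕ) (k : ℕ) {z : ℝ} (hz : 0 ≤ z) :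
    |bterm n z k| = z ^ (n + 2 * k) / ((Nat.factorial k) * (Nat.factorial (n + k))) := by
  rw [bterm, abs_div, abs_mul, abs_pow, abs_neg, abs_one, one_pow, one_mul,
    abs_of_nonneg (pow_nonneg hz _), abs_of_nonneg (by positivity)]

lemma abs_bterm_le (n : ℕ) (k : ℕ) {z : ℝ} (hz : 0 ≤ z) :
    |bterm n z k| ≤ z ^ n / (Nat.factorial n) * ((z ^ 2) ^ k / (Nat.factorial k)) := by
  rw [abs_bterm n k hz]
  have h1 : (z:ℝ) ^ (n + 2 * k) = z ^ n * (z ^ 2) ^ k := by ring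
  rw [h1, div_mul_div_comm]
  have hfac : (Nat.factorial n : ℝ) ≤ Nat.factorial (n + k) := by
    exact_mod_cast Nat.factorial_le (Nat.le_add_right n k)
  have h3 : (0:ℝ) < Nat.factorial k := by positivity
  rw [div_le_div_iff₀ (by positivity) (by positivity)]
  have hp : (0:ℝ) ≤ z ^ n * (z ^ 2) ^ k := by positivity
  nlinarith [mul_le_mul_of_nonneg_left (mul_le_mul_of_nonneg_left hfac (le_of_lt h3)) hp]

lemma summable_majorant (c : ℝ) (w : ℝ) : Summable (fun k : ℕ => c * (w ^ k / Nat.factorial k)) :=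
  (Real.summable_pow_div_factorial w).mul_left c

lemma summable_abs_bterm (n : ℕ) {z : ℝ} (hz : 0 ≤ z) :
    Summable (fun k => |bterm n z k|) := by
  apply Summable.of_nonneg_of_le (fun k => abs_nonneg _) (fun k => abs_bterm_le n k hz)
  simpa [mul_div_assoc] using summable_majorant (z ^ n / Nat.factorial n) (z ^ 2)

lemma summable_bterm (n : ℕ) {z : ℝ} (hz : 0 ≤ z) : Summable (bterm n z) :=
  summable_abs_bterm n hz |>.of_abs

lemma hasSum_bterm (n : ℕ) {z : ℝ} (hz : 0 ≤ z) : HasSum (bterm n z) (besselJ n z) :=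
  (summable_bterm n hz).hasSum

lemma abs_besselJ_le (n : ℕ) {z : ℝ} (hz : 0 ≤ z) :
    |besselJ n z| ≤ z ^ n / (Nat.factorial n) * ∑' k : ℕ, (z ^ 2) ^ k / Nat.factorial k := by
  calc |besselJ n z| ≤ ∑' k, |bterm n z k| := by
        rw [besselJ_eq]; simpa using norm_tsum_le_tsum_norm (f := bterm n z) (by simpa using summable_abs_bterm n hz)
    _ ≤ ∑' k : ℕ, z ^ n / (Nat.factorial n) * ((z ^ 2) ^ k / Nat.factorial k) := by
        apply Summable.tsum_le_tsum (fun k => abs_bterm_le n k hz) (summable_abs_bterm n hz)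
        simpa [mul_div_assoc] using summable_majorant (z ^ n / Nat.factorial n) (z ^ 2)
    _ = _ := by rw [tsum_mul_left]

lemma besselJ_tendsto_zero {z : ℝ} (hz : 0 ≤ z) :
    Tendsto (fun n => besselJ n z) atTop (nhds 0) := by
  apply squeeze_zero_norm (fun n => by
    simpa using abs_besselJ_le n hz)
  have h := (Real.summable_pow_div_factorial z).tendsto_atTop_zero
  simpa using h.mul_const (∑' k : ℕ, (z ^ 2) ^ k / Nat.factorial k)

/-- Three-term recurrence. -/
lemma bessel_rec (n : ℕ) {z : ℝ} (hz : 0 ≤ z) :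
    ((n : ℝ) + 1) * besselJ (n + 1) z = z * besselJ n z + z * besselJ (n + 2) z := by
  -- F k : shifted series for z * besselJ (n+2)
  set g : ℕ → ℝ := fun k => z * bterm (n + 2) z k with hg
  set F : ℕ → ℝ := fun k => Nat.rec 0 (fun k _ => g k) k with hF
  have hF0 : F 0 = 0 := rfl
  have hFs : ∀ k, F (k + 1) = g k := fun k => rfl
  have hgsum : HasSum g (z * besselJ (n + 2) z) := (hasSum_bterm (n + 2) hz).mul_left z
  have hFsum : HasSum F (z * besselJ (n + 2) z) := by
    have := (hasSum_nat_add_iff (f := F) 1).mp (by simpa [hFs] using hgsum)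
    simpa [hF0] using this
  have hfsum : HasSum (fun k => z * bterm n z k) (z * besselJ n z) :=
    (hasSum_bterm n hz).mul_left z
  have hhsum : HasSum (fun k => ((n : ℝ) + 1) * bterm (n + 1) z k)
      (((n : ℝ) + 1) * besselJ (n + 1) z) := (hasSum_bterm (n + 1) hz).mul_left _
  have key : ∀ k, ((n : ℝ) + 1) * bterm (n + 1) z k = z * bterm n z k + F k := by
    intro k
    cases k with
    | zero =>
      simp only [hF0, add_zero, bterm]
      have h1 : (Nat.factorial (n + 1) : ℝ) = (n + 1) * Nat.factorial n := by
        push_cast [Nat.factorial_succ]; ring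
      field_simp [h1]
      push_cast [Nat.factorial_succ]; ring
    | succ k =>
      rw [hFs, hg]
      simp only [bterm]
      have e1 : (n + 1) + 2 * (k + 1) = n + 2 * k + 3 := by ring
      have e2 : n + 2 * (k + 1) = n + 2 * k + 2 := by ring
      have e3 : (n + 2) + 2 * k = n + 2 * k + 2 := by ring
      have i1 : (n + 1) + (k + 1) = (n + k + 1) + 1 := by ring
      have i2 : n + (k + 1) = n + k + 1 := by ring
      have i3 : (n + 2) + k = (n + k + 1) + 1 := by ring
      rw [e1, e2, e3, i1, i2, i3]
      have f1 : (Nat.factorial ((n + k + 1) + 1) : ℝ) = (n + k + 2) * Nat.factorial (n + k + 1) := by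
        push_cast [Nat.factorial_succ]; ring
      have f2 : (Nat.factorial (k + 1) : ℝ) = (k + 1) * Nat.factorial k := by
        push_cast [Nat.factorial_succ]; ring
      have hk : (0:ℝ) < Nat.factorial k := by positivity
      have hnk : (0:ℝ) < Nat.factorial (n + k + 1) := by positivity
      rw [f1, f2]
      rw [pow_succ]
      have hz3 : z ^ (n + 2 * k + 3) = z * z ^ (n + 2 * k + 2) := by ring
      rw [hz3]
      field_simp
      ring
  have : HasSum (fun k => ((n : ℝ) + 1) * bterm (n + 1) z k)
      (z * besselJ n z + z * besselJ (n + 2) z) := by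
    have := hfsum.add hFsum
    simpa [← key] using this
  exact hhsum.unique this

theorem stmt_9 (θ : ℝ) (hθ : 0 < θ) (x y : ℕ) (hxy : x ≠ y) :
    Real.sqrt θ * (besselJ x (Real.sqrt θ) * besselJ (y + 1) (Real.sqrt θ)
          - besselJ y (Real.sqrt θ) * besselJ (x + 1) (Real.sqrt θ)) / ((x : ℝ) - y)
      = ∑' k : ℕ, besselJ (x + k + 1) (Real.sqrt θ) * besselJ (y + k + 1) (Real.sqrt θ) := by
  set z := Real.sqrt θ with hzdef
  have hz : 0 ≤ z := Real.sqrt_nonneg θ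
  set J : ℕ → ℝ := fun m => besselJ m z with hJ
  set C : ℝ := ∑' k : ℕ, (z ^ 2) ^ k / Nat.factorial k with hC
  set C0 : ℝ := ∑' j : ℕ, z ^ j / Nat.factorial j with hC0
  have hC0bound : ∀ m : ℕ, z ^ m / Nat.factorial m ≤ C0 := by
    intro m
    exact Summable.le_tsum (Real.summable_pow_div_factorial z) m (fun j _ => by positivity)
  have hCnn : 0 ≤ C := tsum_nonneg (fun k => by positivity)
  have hC0nn : 0 ≤ C0 := tsum_nonneg (fun k => by positivity)
  have hJbound : ∀ m : ℕ, |J m| ≤ C0 * C := by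
    intro m
    calc |J m| ≤ z ^ m / Nat.factorial m * C := abs_besselJ_le m hz
      _ ≤ C0 * C := mul_le_mul_of_nonneg_right (hC0bound m) hCnn
  -- summability of the product series
  have hA : Summable (fun k => J (x + k + 1) * J (y + k + 1)) := by
    apply Summable.of_norm
    apply Summable.of_nonneg_of_le (fun k => norm_nonneg _)
      (f := fun k => (z ^ (x + 1) / Nat.factorial (x + 1) * C * (C0 * C)) * (z ^ k / Nat.factorial k))
    · intro k
      have h1 : |J (x + k + 1)| ≤ z ^ (x + k + 1) / Nat.factorial (x + k + 1) * C :=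
        abs_besselJ_le _ hz
      have h2 : z ^ (x + k + 1) / (Nat.factorial (x + k + 1) : ℝ)
          ≤ (z ^ (x + 1) / Nat.factorial (x + 1)) * (z ^ k / Nat.factorial k) := by
        have hd : (Nat.factorial (x + 1) * Nat.factorial k : ℝ) ≤ Nat.factorial (x + k + 1) := by
          have := Nat.le_of_dvd (Nat.factorial_pos _)
            (Nat.factorial_mul_factorial_dvd_factorial_add (x + 1) k)
          exact_mod_cast (by simpa [show x + 1 + k = x + k + 1 by ring] using this)
        rw [div_mul_div_comm, ← pow_add]
        have hxk : x + 1 + k = x + k + 1 := by ring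
        rw [hxk]
        rw [div_le_div_iff₀ (by positivity) (by positivity)]
        nlinarith [pow_nonneg hz (x + k + 1), hd,
          mul_le_mul_of_nonneg_left hd (pow_nonneg hz (x + k + 1))]
      calc ‖J (x + k + 1) * J (y + k + 1)‖ = |J (x + k + 1)| * |J (y + k + 1)| := by
            rw [Real.norm_eq_abs, abs_mul]
        _ ≤ (z ^ (x + k + 1) / Nat.factorial (x + k + 1) * C) * (C0 * C) := by
            apply mul_le_mul h1 (hJbound _) (abs_nonneg _) (by positivity)
        _ ≤ (z ^ (x + 1) / Nat.factorial (x + 1) * (z ^ k / Nat.factorial k) * C) * (C0 * C) := by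
            exact mul_le_mul_of_nonneg_right (mul_le_mul_of_nonneg_right h2 hCnn)
              (mul_nonneg hC0nn hCnn)
        _ = (z ^ (x + 1) / Nat.factorial (x + 1) * C * (C0 * C)) * (z ^ k / Nat.factorial k) := by
            ring
    · exact summable_majorant _ z
  -- the telescoping quantity
  set D : ℕ → ℝ := fun k => J (x + k) * J (y + k + 1) - J (y + k) * J (x + k + 1) with hD
  have hrec : ∀ k : ℕ, ((x : ℝ) - y) * (J (x + k + 1) * J (y + k + 1))
      = z * (D k - D (k + 1)) := by
    intro k
    have rx := bessel_rec (x + k) hz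
    have ry := bessel_rec (y + k) hz
    simp only [hD, hJ]
    rw [show x + (k + 1) = x + k + 1 from by ring, show y + (k + 1) = y + k + 1 from by ring,
      show x + k + 1 + 1 = x + k + 2 from by ring, show y + k + 1 + 1 = y + k + 2 from by ring]
    push_cast at rx ry ⊢
    linear_combination besselJ (y + k + 1) z * rx - besselJ (x + k + 1) z * ry
  have hDzero : Tendsto D atTop (nhds 0) := by
    have hJt : Tendsto (fun m => besselJ m z) atTop (nhds 0) := besselJ_tendsto_zero hz
    have t : ∀ a : ℕ, Tendsto (fun k => J (a + k)) atTop (nhds 0) := fun a =>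
      hJt.comp (tendsto_atTop_mono (fun k => Nat.le_add_left k a) tendsto_id)
    have e : D = fun k => J (x + k) * J ((y + 1) + k) - J (y + k) * J ((x + 1) + k) := by
      funext k
      simp only [hD]
      rw [show y + k + 1 = y + 1 + k from by ring, show x + k + 1 = x + 1 + k from by ring]
    rw [e]
    simpa using ((t x).mul (t (y + 1))).sub ((t y).mul (t (x + 1)))
  have htel : HasSum (fun k => ((x : ℝ) - y) * (J (x + k + 1) * J (y + k + 1)))
      (z * D 0) := by
    have hsum : Summable (fun k => ((x : ℝ) - y) * (J (x + k + 1) * J (y + k + 1))) :=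
      hA.mul_left _
    rw [hsum.hasSum_iff_tendsto_nat]
    have hps : ∀ n : ℕ, ∑ i ∈ range n, ((x : ℝ) - y) * (J (x + i + 1) * J (y + i + 1))
        = z * (D 0 - D n) := by
      intro n
      calc ∑ i ∈ range n, ((x : ℝ) - y) * (J (x + i + 1) * J (y + i + 1))
          = ∑ i ∈ range n, (z * D i - z * D (i + 1)) := by
            apply Finset.sum_congr rfl; intro i _; rw [hrec i]; ring
        _ = z * D 0 - z * D n := Finset.sum_range_sub' (fun i => z * D i) n
        _ = z * (D 0 - D n) := by ring
    simp only [hps]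
    have : Tendsto (fun n => z * (D 0 - D n)) atTop (nhds (z * (D 0 - 0))) :=
      (tendsto_const_nhds.sub hDzero).const_mul z
    simpa using this
  have hxy' : (x : ℝ) - y ≠ 0 := sub_ne_zero.mpr (by exact_mod_cast hxy)
  have htsum : ((x : ℝ) - y) * (∑' k, J (x + k + 1) * J (y + k + 1)) = z * D 0 := by
    rw [← tsum_mul_left]
    exact htel.tsum_eq
  have hD0 : D 0 = besselJ x z * besselJ (y + 1) z - besselJ y z * besselJ (x + 1) z := by
    simp [hD, hJ]
  rw [div_eq_iff hxy']
  rw [← hD0]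
  rw [show (∑' k : ℕ, besselJ (x + k + 1) z * besselJ (y + k + 1) z)
      = ∑' k, J (x + k + 1) * J (y + k + 1) from rfl]
  linarith [htsum]
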